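/- Let n, m be positive integers, Q_m f = f'' + ((n−1+2m)/r)·f', and let p be an integer with 0 ≤ p ≤ m−1. Set Ψ_p(r) = r^{-n-2p}. Then for every integer l with 0 ≤ l ≤ m−1−p there is a nonzero constant C_l such that the l-th iterate satisfies Q_m^l Ψ_p (r) = C_l · r^{-n-2(p+l)} for all r > 0, and for every integer l with m−p ≤ l, Q_m^l Ψ_p is identically zero on (0,∞). -/
import Mathlib


/-- The second-order operator `Q_m f = f'' + ((n-1+2m)/r)·f'`. -/
noncomputable def Qop (n m : ℕ) (f : ℝ → ℝ) : ℝ → ℝ :=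
  fun r => deriv (deriv f) r + (((n : ℝ) - 1 + 2 * (m : ℝ)) / r) * deriv f r

open Filter Set

lemma derivA (C a : ℝ) (f : ℝ → ℝ) (hf : ∀ s, 0 < s → f s = C * s ^ a) :
    ∀ r, 0 < r → deriv f r = C * a * r ^ (a - 1) := by
  intro r hr
  have hev : f =ᶠ[nhds r] fun s => C * s ^ a :=
    Filter.eventuallyEq_of_mem (Ioi_mem_nhds hr) (fun s hs => hf s hs)
  rw [hev.deriv_eq]
  have h := ((Real.hasDerivAt_rpow_const (p := a) (Or.inl hr.ne')).const_mul C).deriv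
  rw [h]; ring

lemma qopA (n m : ℕ) (C a : ℝ) (f : ℝ → ℝ) (hf : ∀ s, 0 < s → f s = C * s ^ a) :
    ∀ r, 0 < r → Qop n m f r = C * (a * (a + n + 2 * m - 2)) * r ^ (a - 2) := by
  intro r hr
  have h1 : ∀ s, 0 < s → deriv f s = (C * a) * s ^ (a - 1) := fun s hs => by
    rw [derivA C a f hf s hs]
  have h2 : deriv (deriv f) r = (C * a) * (a - 1) * r ^ (a - 1 - 1) := by
    rw [derivA (C * a) (a - 1) (deriv f) h1 r hr]
  show deriv (deriv f) r + (((n : ℝ) - 1 + 2 * m) / r) * deriv f r = _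
  rw [h2, derivA C a f hf r hr]
  have ha : a - 1 - 1 = a - 2 := by ring
  have hr1 : r ^ (a - 1) = r ^ (a - 2) * r := by
    rw [← Real.rpow_add_one hr.ne' (a - 2)]; ring_nf
  rw [ha, hr1]
  field_simp
  ring

lemma qopZ (n m : ℕ) (f : ℝ → ℝ) (hf : ∀ s, 0 < s → f s = 0) :
    ∀ r, 0 < r → Qop n m f r = 0 := by
  intro r hr
  have hev : f =ᶠ[nhds r] fun _ => (0 : ℝ) :=
    Filter.eventuallyEq_of_mem (Ioi_mem_nhds hr) (fun s hs => hf s hs)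
  have hd : ∀ s, 0 < s → deriv f s = 0 := by
    intro s hs
    have hev' : f =ᶠ[nhds s] fun _ => (0 : ℝ) :=
      Filter.eventuallyEq_of_mem (Ioi_mem_nhds hs) (fun t ht => hf t ht)
    rw [hev'.deriv_eq, deriv_const]
  have hev2 : deriv f =ᶠ[nhds r] fun _ => (0 : ℝ) :=
    Filter.eventuallyEq_of_mem (Ioi_mem_nhds hr) (fun s hs => hd s hs)
  show deriv (deriv f) r + (((n : ℝ) - 1 + 2 * m) / r) * deriv f r = 0
  rw [hev2.deriv_eq, deriv_const, hd r hr]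
  ring


/-- For `Ψ_p(r) = r^(-n-2p)` with `0 ≤ p ≤ m-1`: for `0 ≤ l ≤ m-1-p` there is a
nonzero constant `C_l` with `Q_m^l Ψ_p = C_l · r^(-n-2(p+l))` on `(0,∞)`, and for
`l ≥ m-p` the iterate `Q_m^l Ψ_p` vanishes identically on `(0,∞)`. -/
theorem stmt_4 (n m : ℕ) (hn : 1 ≤ n) (hm : 1 ≤ m) (p : ℕ) (hp : p ≤ m - 1) :
    (∀ l : ℕ, l ≤ m - 1 - p →
      ∃ C : ℝ, C ≠ 0 ∧ ∀ r : ℝ, 0 < r →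
        (Qop n m)^[l] (fun s : ℝ => s ^ (-(n : ℝ) - 2 * (p : ℝ))) r
          = C * r ^ (-(n : ℝ) - 2 * ((p : ℝ) + (l : ℝ)))) ∧
    (∀ l : ℕ, m - p ≤ l → ∀ r : ℝ, 0 < r →
      (Qop n m)^[l] (fun s : ℝ => s ^ (-(n : ℝ) - 2 * (p : ℝ))) r = 0) := by
  have hpm : p + 1 ≤ m := by omega
  -- Part 1 as a standalone claim (proved by induction on l)
  have part1 : ∀ l : ℕ, l ≤ m - 1 - p →
      ∃ C : ℝ, C ≠ 0 ∧ ∀ r : ℝ, 0 < r →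
        (Qop n m)^[l] (fun s : ℝ => s ^ (-(n : ℝ) - 2 * (p : ℝ))) r
          = C * r ^ (-(n : ℝ) - 2 * ((p : ℝ) + (l : ℝ))) := by
    intro l
    induction l with
    | zero =>
      intro _
      exact ⟨1, one_ne_zero, fun r hr => by norm_num⟩
    | succ l ih =>
      intro hl
      obtain ⟨C, hC, hCeq⟩ := ih (by omega)
      set a : ℝ := -(n : ℝ) - 2 * ((p : ℝ) + (l : ℝ)) with ha
      refine ⟨C * (a * (a + n + 2 * m - 2)), ?_, ?_⟩
      · have h1 : a ≠ 0 := by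
          have : (1 : ℝ) ≤ (n : ℝ) := by exact_mod_cast hn
          have hp0 : (0 : ℝ) ≤ (p : ℝ) + (l : ℝ) := by positivity
          rw [ha]; nlinarith
        have h2 : a + n + 2 * m - 2 ≠ 0 := by
          have hlt : (p : ℝ) + (l : ℝ) + 2 ≤ (m : ℝ) := by
            have : p + l + 2 ≤ m := by omega
            exact_mod_cast this
          rw [ha]; nlinarith
        exact mul_ne_zero hC (mul_ne_zero h1 h2)
      · intro r hr
        rw [Function.iterate_succ_apply']
        have := qopA n m C a ((Qop n m)^[l] (fun s : ℝ => s ^ (-(n : ℝ) - 2 * (p : ℝ))))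
          (fun s hs => hCeq s hs) r hr
        rw [this]
        have hexp : a - 2 = -(n : ℝ) - 2 * ((p : ℝ) + ((l + 1 : ℕ) : ℝ)) := by
          push_cast [ha]; ring
        rw [hexp]
  refine ⟨part1, ?_⟩
  -- vanishing at l = m - p
  have base : ∀ r : ℝ, 0 < r →
      (Qop n m)^[m - p] (fun s : ℝ => s ^ (-(n : ℝ) - 2 * (p : ℝ))) r = 0 := by
    obtain ⟨C, hC, hCeq⟩ := part1 (m - 1 - p) le_rfl
    have hmp : m - p = (m - 1 - p) + 1 := by omega
    intro r hr
    rw [hmp, Function.iterate_succ_apply']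
    set a : ℝ := -(n : ℝ) - 2 * ((p : ℝ) + ((m - 1 - p : ℕ) : ℝ)) with ha
    have := qopA n m C a ((Qop n m)^[m - 1 - p] (fun s : ℝ => s ^ (-(n : ℝ) - 2 * (p : ℝ))))
      (fun s hs => hCeq s hs) r hr
    rw [this]
    have hz : a + n + 2 * m - 2 = 0 := by
      have : ((m - 1 - p : ℕ) : ℝ) = (m : ℝ) - 1 - (p : ℝ) := by
        have h1 : (p : ℝ) + 1 ≤ (m : ℝ) := by exact_mod_cast hpm
        push_cast [Nat.cast_sub (by omega : p ≤ m - 1), Nat.cast_sub hm]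
        ring
      rw [ha, this]; ring
    rw [hz]; ring
  have zero_iter : ∀ (k : ℕ) (g : ℝ → ℝ), (∀ s, 0 < s → g s = 0) →
      ∀ r : ℝ, 0 < r → (Qop n m)^[k] g r = 0 := by
    intro k
    induction k with
    | zero => intro g hg r hr; exact hg r hr
    | succ k ih =>
      intro g hg r hr
      rw [Function.iterate_succ_apply']
      exact qopZ n m _ (fun s hs => ih g hg s hs) r hr
  intro l hl r hr
  obtain ⟨k, rfl⟩ : ∃ k, l = k + (m - p) := ⟨l - (m - p), by omega⟩
  rw [Function.iterate_add_apply]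
  exact zero_iter k _ (fun s hs => base s hs) r hr
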